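/- Let C be a geodesic metric space, let E be a metric space with distance d_E, and let ι : E → C satisfy dist (ι e) (ι e') ≤ d_E e e' for all e, e' ∈ E (the inclusion is 1-Lipschitz). Let k₁ > 0 and k₃ > 0 and assume: (i) the image of ι is k₁-dense in C, i.e. for every c ∈ C there is e ∈ E with dist (ι e) c ≤ k₁; (ii) for all e, e' ∈ E with dist (ι e) (ι e') ≤ 3k₁ one has d_E e e' ≤ k₃. Then for all e, e' ∈ E, d_E e e' ≤ (k₃/k₁) · dist (ι e) (ι e') + k₃. In particular ι is a quasi-isometry from E onto C. -/
import Mathlib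


/-- Let `C` be a geodesic metric space, `E` a metric space, and `ι : E → C` a
`1`-Lipschitz map whose image is `k₁`-dense in `C`, and such that any two points of `E`
whose images are at distance at most `3k₁` are at distance at most `k₃` in `E`.
Then `d_E e e' ≤ (k₃/k₁) · dist (ι e) (ι e') + k₃` for all `e, e'`; in particular
`ι` is a quasi-isometry from `E` onto `C`. -/
theorem stmt_6 {C E : Type*} [MetricSpace C] [MetricSpace E]
    (hgeo : ∀ x y : C, ∃ f : ℝ → C, f 0 = x ∧ f (dist x y) = y ∧
      ∀ s ∈ Set.Icc (0 : ℝ) (dist x y), ∀ t ∈ Set.Icc (0 : ℝ) (dist x y),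
        dist (f s) (f t) = |s - t|)
    (ι : E → C) (hlip : ∀ e e' : E, dist (ι e) (ι e') ≤ dist e e')
    (k₁ k₃ : ℝ) (hk₁ : 0 < k₁) (hk₃ : 0 < k₃)
    (hdense : ∀ c : C, ∃ e : E, dist (ι e) c ≤ k₁)
    (hloc : ∀ e e' : E, dist (ι e) (ι e') ≤ 3 * k₁ → dist e e' ≤ k₃) :
    ∀ e e' : E, dist e e' ≤ (k₃ / k₁) * dist (ι e) (ι e') + k₃ := by
  have key : ∀ n : ℕ, ∀ e e' : E, dist (ι e) (ι e') ≤ (n + 1) * k₁ →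
      dist e e' ≤ (n + 1) * k₃ := by
    intro n
    induction n with
    | zero =>
      intro e e' hD
      push_cast at hD ⊢
      linarith [hloc e e' (by linarith)]
    | succ n ih =>
      intro e e' hD
      by_cases h3 : dist (ι e) (ι e') ≤ 3 * k₁
      · push_cast
        nlinarith [hloc e e' h3, hk₃.le, Nat.cast_nonneg (α := ℝ) n]
      push_neg at h3
      set D := dist (ι e) (ι e') with hDdef
      obtain ⟨f, hf0, hfD, hfd⟩ := hgeo (ι e) (ι e')
      have hs : D - 2 * k₁ ∈ Set.Icc (0 : ℝ) D := by
        constructor <;> nlinarith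
      have h0mem : (0 : ℝ) ∈ Set.Icc (0 : ℝ) D := by
        exact ⟨le_refl 0, by nlinarith⟩
      have hDmem : D ∈ Set.Icc (0 : ℝ) D := by
        exact ⟨by nlinarith, le_refl D⟩
      obtain ⟨e'', he''⟩ := hdense (f (D - 2 * k₁))
      -- dist from ι e to f s
      have d1 : dist (ι e) (f (D - 2 * k₁)) = D - 2 * k₁ := by
        have := hfd 0 h0mem (D - 2 * k₁) hs
        rw [hf0] at this
        rw [this]
        rw [abs_of_nonpos (by nlinarith)]
        ring
      have d2 : dist (f (D - 2 * k₁)) (ι e') = 2 * k₁ := by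
        have := hfd (D - 2 * k₁) hs D hDmem
        rw [hfD] at this
        rw [this, abs_of_nonpos (by nlinarith)]
        ring
      have hmid : dist (ι e) (ι e'') ≤ (n + 1) * k₁ := by
        calc dist (ι e) (ι e'') ≤ dist (ι e) (f (D - 2 * k₁)) +
              dist (f (D - 2 * k₁)) (ι e'') := dist_triangle _ _ _
          _ ≤ (D - 2 * k₁) + k₁ := by
              rw [d1]; gcongr; rw [dist_comm]; exact he''
          _ ≤ (n + 1) * k₁ := by push_cast at hD ⊢; linarith
      have hend : dist (ι e'') (ι e') ≤ 3 * k₁ := by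
        calc dist (ι e'') (ι e') ≤ dist (ι e'') (f (D - 2 * k₁)) +
              dist (f (D - 2 * k₁)) (ι e') := dist_triangle _ _ _
          _ ≤ k₁ + 2 * k₁ := by rw [d2]; gcongr
          _ = 3 * k₁ := by ring
      have h1 := ih e e'' hmid
      have h2 := hloc e'' e' hend
      calc dist e e' ≤ dist e e'' + dist e'' e' := dist_triangle _ _ _
        _ ≤ (n + 1) * k₃ + k₃ := by linarith
        _ ≤ (↑(n + 1) + 1) * k₃ := by push_cast; linarith
  intro e e'
  set D := dist (ι e) (ι e') with hDdef
  have hD0 : 0 ≤ D := dist_nonneg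
  set n := Nat.floor (D / k₁) with hn
  have hfl : (n : ℝ) ≤ D / k₁ := Nat.floor_le (by positivity)
  have hlt : D / k₁ < n + 1 := Nat.lt_floor_add_one _
  have hDle : D ≤ (n + 1) * k₁ := by
    rw [div_lt_iff₀ hk₁] at hlt; linarith
  have := key n e e' hDle
  have heq : (k₃ / k₁) * D = k₃ * (D / k₁) := by ring
  have : ((n : ℝ) + 1) * k₃ ≤ (k₃ / k₁) * D + k₃ := by
    rw [heq]; nlinarith [hfl, hk₃.le]
  linarith [key n e e' hDle]
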